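/- For all integers n and δ with n > δ ≥ 1: the minimum of ξ(G) over all connected simple graphs G on n vertices with minimum degree exactly δ equals ⌈2(n−1−δ)/δ⌉, and the minimum of π(G) over all connected simple graphs G on n vertices with minimum degree exactly δ equals ⌈2(n−1)/δ⌉. -/

import Mathlib

open Finset

namespace Forwarding

variable {V : Type*} [Fintype V] [DecidableEq V]

/-- A routing of a graph `G`: for every ordered pair of vertices, a fixed path.
(For `x = y` the path condition forces the trivial walk, so only the
`n(n-1)` paths between distinct vertices matter.) -/
structure Routing (G : SimpleGraph V) where
  walk : ∀ x y : V, G.Walk x y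
  isPath : ∀ x y : V, (walk x y).IsPath

/-- A routing is minimal if every specified path is a shortest path. -/
def Routing.IsMinimal {G : SimpleGraph V} (R : Routing G) : Prop :=
  ∀ x y : V, (R.walk x y).length = G.dist x y

/-- The load of a vertex `x`: the number of paths of the routing passing
through `x` as an internal vertex. -/
def vertexLoad {G : SimpleGraph V} (R : Routing G) (x : V) : ℕ :=
  (univ.filter fun p : V × V =>
    p.1 ≠ p.2 ∧ x ∈ (R.walk p.1 p.2).support ∧ x ≠ p.1 ∧ x ≠ p.2).card

/-- The load of an edge `e`: the number of paths of the routing traversing `e`. -/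
def edgeLoad {G : SimpleGraph V} (R : Routing G) (e : Sym2 V) : ℕ :=
  (univ.filter fun p : V × V => p.1 ≠ p.2 ∧ e ∈ (R.walk p.1 p.2).edges).card

/-- `ξ(G,R)`: the maximum vertex load of the routing `R`. -/
def routingVertexIndex {G : SimpleGraph V} (R : Routing G) : ℕ :=
  univ.sup (vertexLoad R)

/-- `π(G,R)`: the maximum edge load of the routing `R`. (Edges not in `G`
carry load `0`, so taking the `sup` over all of `Sym2 V` is equivalent.) -/
def routingEdgeIndex {G : SimpleGraph V} (R : Routing G) : ℕ :=
  univ.sup (edgeLoad R)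

/-- The vertex-forwarding index `ξ(G)`. -/
noncomputable def xi (G : SimpleGraph V) : ℕ :=
  sInf { k | ∃ R : Routing G, routingVertexIndex R = k }

/-- The vertex-forwarding index over minimal routings, `ξ_m(G)`. -/
noncomputable def xiMin (G : SimpleGraph V) : ℕ :=
  sInf { k | ∃ R : Routing G, R.IsMinimal ∧ routingVertexIndex R = k }

/-- The edge-forwarding index `π(G)`. -/
noncomputable def piIdx (G : SimpleGraph V) : ℕ :=
  sInf { k | ∃ R : Routing G, routingEdgeIndex R = k }

/-- The edge-forwarding index over minimal routings, `π_m(G)`. -/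
noncomputable def piMinIdx (G : SimpleGraph V) : ℕ :=
  sInf { k | ∃ R : Routing G, R.IsMinimal ∧ routingEdgeIndex R = k }

end Forwarding

namespace FP
open Forwarding SimpleGraph

variable (n d : ℕ)

def G0 : SimpleGraph (Fin n) where
  Adj x y := x ≠ y ∧ (x.val = 0 → y.val ≤ d) ∧ (y.val = 0 → x.val ≤ d)
  symm := ⟨fun x y ⟨h1, h2, h3⟩ => ⟨h1.symm, h3, h2⟩⟩
  loopless := ⟨fun x h => h.1 rfl⟩

instance : DecidableRel (G0 n d).Adj := fun x y =>
  inferInstanceAs (Decidable (x ≠ y ∧ (x.val = 0 → y.val ≤ d) ∧ (y.val = 0 → x.val ≤ d)))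

lemma adj_iff {x y : Fin n} :
    (G0 n d).Adj x y ↔ x ≠ y ∧ (x.val = 0 → y.val ≤ d) ∧ (y.val = 0 → x.val ≤ d) := Iff.rfl

lemma nonadj_char {x y : Fin n} (hxy : x ≠ y) (h : ¬ (G0 n d).Adj x y) :
    (x.val = 0 ∧ d < y.val) ∨ (y.val = 0 ∧ d < x.val) := by
  by_contra hC
  push_neg at hC
  exact h ⟨hxy, hC.1, hC.2⟩

def mid (hd : 0 < d) (hn : d < n) (t : ℕ) : Fin n :=
  ⟨t % d + 1, by have := Nat.mod_lt t hd; omega⟩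

def tid (x y : Fin n) : ℕ :=
  if x.val = 0 then 2 * (y.val - (d + 1)) else 2 * (x.val - (d + 1)) + 1

lemma adj_left (hd : 0 < d) (hn : d < n) (t : ℕ) {x : Fin n}
    (hx : x.val = 0 ∨ d < x.val) : (G0 n d).Adj x (mid n d hd hn t) := by
  have hm : (mid n d hd hn t).val = t % d + 1 := rfl
  have hmd := Nat.mod_lt t hd
  refine ⟨fun he => ?_, fun h0 => by omega, fun h0 => by omega⟩
  · rw [he] at hx; omega

lemma adj_right (hd : 0 < d) (hn : d < n) (t : ℕ) {y : Fin n}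
    (hy : y.val = 0 ∨ d < y.val) : (G0 n d).Adj (mid n d hd hn t) y :=
  ((G0 n d).adj_symm (adj_left n d hd hn t hy))

def R0walk (hd : 0 < d) (hn : d < n) (x y : Fin n) : (G0 n d).Walk x y :=
  if h : x = y then (SimpleGraph.Walk.nil : (G0 n d).Walk x x).copy rfl h
  else if ha : (G0 n d).Adj x y then SimpleGraph.Walk.cons ha SimpleGraph.Walk.nil
  else
    have hc := nonadj_char n d h ha
    SimpleGraph.Walk.cons (adj_left n d hd hn (tid n d x y) (hc.imp And.left And.right))
      (SimpleGraph.Walk.cons (adj_right n d hd hn (tid n d x y)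
        (hc.symm.imp And.left And.right)) SimpleGraph.Walk.nil)

lemma R0walk_support (hd : 0 < d) (hn : d < n) {x y : Fin n} (h : x ≠ y) :
    (R0walk n d hd hn x y).support =
      if (G0 n d).Adj x y then [x, y]
      else [x, mid n d hd hn (tid n d x y), y] := by
  unfold R0walk
  rw [dif_neg h]
  split_ifs with ha <;> simp

lemma R0walk_edges (hd : 0 < d) (hn : d < n) {x y : Fin n} (h : x ≠ y) :
    (R0walk n d hd hn x y).edges =
      if (G0 n d).Adj x y then [s(x, y)]
      else [s(x, mid n d hd hn (tid n d x y)), s(mid n d hd hn (tid n d x y), y)] := by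
  unfold R0walk
  rw [dif_neg h]
  split_ifs with ha <;> simp

lemma R0walk_isPath (hd : 0 < d) (hn : d < n) (x y : Fin n) :
    (R0walk n d hd hn x y).IsPath := by
  unfold R0walk
  split_ifs with h ha
  · simp
  · simp [SimpleGraph.Walk.isPath_def, h]
  · have hc := nonadj_char n d h ha
    have h1 := adj_left n d hd hn (tid n d x y) (hc.imp And.left And.right)
    have h2 := adj_right n d hd hn (tid n d x y) (hc.symm.imp And.left And.right)
    simp [SimpleGraph.Walk.isPath_def, h1.ne, h2.ne, h]

def R0 (hd : 0 < d) (hn : d < n) : Routing (G0 n d) :=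
  ⟨R0walk n d hd hn, R0walk_isPath n d hd hn⟩

end FP

namespace FP
open Forwarding SimpleGraph

variable (n d : ℕ)

lemma mid_val (hd : 0 < d) (hn : d < n) (t : ℕ) :
    (mid n d hd hn t).val = t % d + 1 := rfl

lemma tid_lt (hn : d < n) {x y : Fin n}
    (hc : (x.val = 0 ∧ d < y.val) ∨ (y.val = 0 ∧ d < x.val)) :
    tid n d x y < 2 * (n - 1 - d) := by
  unfold tid
  rcases hc with ⟨hx, hy⟩ | ⟨hy, hx⟩
  · rw [if_pos hx]; have := y.isLt; omega
  · rw [if_neg (by omega)]; have := x.isLt; omega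

lemma tid_inj {x y x' y' : Fin n}
    (hc : (x.val = 0 ∧ d < y.val) ∨ (y.val = 0 ∧ d < x.val))
    (hc' : (x'.val = 0 ∧ d < y'.val) ∨ (y'.val = 0 ∧ d < x'.val))
    (ht : tid n d x y = tid n d x' y') : x = x' ∧ y = y' := by
  unfold tid at ht
  rcases hc with ⟨hx, hy⟩ | ⟨hy, hx⟩ <;> rcases hc' with ⟨hx', hy'⟩ | ⟨hy', hx'⟩
  · rw [if_pos hx, if_pos hx'] at ht
    exact ⟨Fin.ext (by omega), Fin.ext (by omega)⟩
  · rw [if_pos hx, if_neg (by omega)] at ht; omega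
  · rw [if_neg (by omega), if_pos hx'] at ht; omega
  · rw [if_neg (by omega), if_neg (by omega)] at ht
    exact ⟨Fin.ext (by omega), Fin.ext (by omega)⟩

def K1 : ℕ := (2 * (n - 1 - d)) ⌈/⌉ d
def K2 : ℕ := (2 * (n - 1)) ⌈/⌉ d

lemma le_K1_mul (hd : 0 < d) : 2 * (n - 1 - d) ≤ d * K1 n d :=
  le_smul_ceilDiv hd

lemma K1_le (hd : 0 < d) {k : ℕ} (h : 2 * (n - 1 - d) ≤ d * k) : K1 n d ≤ k :=
  (ceilDiv_le_iff_le_mul hd).2 h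

lemma K2_le (hd : 0 < d) {k : ℕ} (h : 2 * (n - 1) ≤ d * k) : K2 n d ≤ k :=
  (ceilDiv_le_iff_le_mul hd).2 h

lemma div_lt_K1 (hd : 0 < d) {t : ℕ} (ht : t < 2 * (n - 1 - d)) : t / d < K1 n d := by
  by_contra hC
  push_neg at hC
  have h1 := (ceilDiv_le_iff_le_mul hd).1 (le_trans (le_refl (K1 n d)) hC)
  have h2 : d * (t / d) ≤ t := Nat.mul_div_le t d
  have := Nat.mul_le_mul_left d hC
  omega

lemma K2_eq (hd : 0 < d) (hn : d < n) : K2 n d = K1 n d + 2 := by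
  unfold K1 K2
  rw [Nat.ceilDiv_eq_add_pred_div, Nat.ceilDiv_eq_add_pred_div,
    show 2 * (n - 1) + d - 1 = 2 * (n - 1 - d) + d - 1 + d + d from by omega,
    Nat.add_div_right _ hd, Nat.add_div_right _ hd]

lemma ceil_cast (hd : 0 < d) (a : ℕ) : ⌈(a : ℚ) / d⌉ = (a ⌈/⌉ d : ℕ) := by
  have hdq : (0 : ℚ) < d := by exact_mod_cast hd
  rcases Nat.eq_zero_or_pos (a ⌈/⌉ d) with h0 | h1
  · have ha : a = 0 := by
      have := le_smul_ceilDiv (b := a) hd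
      rw [h0] at this; simpa using this
    simp [ha, h0]
  · rw [Int.ceil_eq_iff]
    constructor
    · have hlt : d * (a ⌈/⌉ d - 1) < a := by
        by_contra hC
        push_neg at hC
        have := (ceilDiv_le_iff_le_mul hd).2 hC
        omega
      have hlt2 : ((a ⌈/⌉ d - 1) * d : ℕ) < a := by rw [Nat.mul_comm]; exact hlt
      rw [lt_div_iff₀ hdq]
      push_cast
      rw [show ((a ⌈/⌉ d : ℕ) : ℚ) - 1 = ((a ⌈/⌉ d - 1 : ℕ) : ℚ) from by
        rw [Nat.cast_sub h1, Nat.cast_one]]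
      exact_mod_cast hlt2
    · rw [div_le_iff₀ hdq]
      have := le_smul_ceilDiv (b := a) hd
      have h2 : a ≤ (a ⌈/⌉ d) * d := by simpa [Nat.mul_comm] using this
      exact_mod_cast h2

end FP

namespace FP
open Forwarding SimpleGraph

variable (n d : ℕ)

lemma mid_bounds (hd : 0 < d) (hn : d < n) (t : ℕ) :
    1 ≤ (mid n d hd hn t).val ∧ (mid n d hd hn t).val ≤ d := by
  have := Nat.mod_lt t hd
  rw [mid_val]
  omega

lemma walk_mem_char (hd : 0 < d) (hn : d < n) {x y m : Fin n}
    (h1 : x ≠ y) (h2 : m ∈ (R0walk n d hd hn x y).support) (h3 : m ≠ x) (h4 : m ≠ y) :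
    ¬ (G0 n d).Adj x y ∧ m = mid n d hd hn (tid n d x y) := by
  by_cases ha : (G0 n d).Adj x y
  · rw [R0walk_support n d hd hn h1, if_pos ha] at h2
    simp only [List.mem_cons, List.mem_singleton, List.not_mem_nil, or_false] at h2
    rcases h2 with h | h
    exacts [absurd h h3, absurd h h4]
  · refine ⟨ha, ?_⟩
    rw [R0walk_support n d hd hn h1, if_neg ha] at h2
    simp only [List.mem_cons, List.mem_singleton, List.not_mem_nil, or_false] at h2
    rcases h2 with h | h | h
    exacts [absurd h h3, h, absurd h h4]

lemma vertexLoad_le (hd : 0 < d) (hn : d < n) (m : Fin n) :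
    vertexLoad (R0 n d hd hn) m ≤ K1 n d := by
  have hcard : vertexLoad (R0 n d hd hn) m ≤ (Finset.range (K1 n d)).card := by
    unfold vertexLoad
    apply Finset.card_le_card_of_injOn (fun p => tid n d p.1 p.2 / d)
    · intro p hp
      simp only [Finset.coe_filter, Set.mem_setOf_eq, Finset.mem_filter, Finset.mem_univ, true_and] at hp
      obtain ⟨hna, _⟩ := walk_mem_char n d hd hn hp.1 hp.2.1 hp.2.2.1 hp.2.2.2
      have hc := nonadj_char n d hp.1 hna
      rw [Finset.mem_coe, Finset.mem_range]
      exact div_lt_K1 n d hd (tid_lt n d hn hc)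
    · intro p hp p' hp' hf
      simp only [Finset.coe_filter, Set.mem_setOf_eq, Finset.mem_univ, true_and] at hp hp'
      obtain ⟨hna, hm⟩ := walk_mem_char n d hd hn hp.1 hp.2.1 hp.2.2.1 hp.2.2.2
      obtain ⟨hna', hm'⟩ := walk_mem_char n d hd hn hp'.1 hp'.2.1 hp'.2.2.1 hp'.2.2.2
      have hc := nonadj_char n d hp.1 hna
      have hc' := nonadj_char n d hp'.1 hna'
      have hmod : tid n d p.1 p.2 % d = tid n d p'.1 p'.2 % d := by
        have := congrArg Fin.val (hm.symm.trans hm')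
        rw [mid_val, mid_val] at this
        omega
      dsimp only at hf
      have e1 := Nat.div_add_mod (tid n d p.1 p.2) d
      have e2 := Nat.div_add_mod (tid n d p'.1 p'.2) d
      rw [← hf, ← hmod] at e2
      have ht : tid n d p.1 p.2 = tid n d p'.1 p'.2 := by omega
      obtain ⟨q1, q2⟩ := tid_inj n d hc hc' ht
      exact Prod.ext q1 q2
  simpa using hcard

lemma edge_mem_char (hd : 0 < d) (hn : d < n) {x y : Fin n} {e : Sym2 (Fin n)} (h1 : x ≠ y)
    (h2 : e ∈ (R0walk n d hd hn x y).edges) :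
    ((G0 n d).Adj x y ∧ e = s(x, y)) ∨
      (¬ (G0 n d).Adj x y ∧
        (e = s(x, mid n d hd hn (tid n d x y)) ∨ e = s(mid n d hd hn (tid n d x y), y))) := by
  by_cases ha : (G0 n d).Adj x y
  · left
    refine ⟨ha, ?_⟩
    rw [R0walk_edges n d hd hn h1, if_pos ha] at h2
    simpa using h2
  · right
    refine ⟨ha, ?_⟩
    rw [R0walk_edges n d hd hn h1, if_neg ha] at h2
    simpa using h2

lemma mid_of_edge (hd : 0 < d) (hn : d < n) {x y : Fin n} {e : Sym2 (Fin n)}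
    (hc : (x.val = 0 ∧ d < y.val) ∨ (y.val = 0 ∧ d < x.val))
    (he : e = s(x, mid n d hd hn (tid n d x y)) ∨ e = s(mid n d hd hn (tid n d x y), y)) :
    ∃ z : Fin n, e = s(mid n d hd hn (tid n d x y), z) ∧ (z.val = 0 ∨ d < z.val) := by
  rcases he with he | he
  · exact ⟨x, by rw [he, Sym2.eq_swap], hc.imp And.left And.right⟩
  · exact ⟨y, he, hc.symm.imp And.left And.right⟩

lemma edgeLoad_le (hd : 0 < d) (hn : d < n) (e : Sym2 (Fin n)) :
    edgeLoad (R0 n d hd hn) e ≤ K2 n d := by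
  rw [K2_eq n d hd hn]
  have hcard : edgeLoad (R0 n d hd hn) e ≤ (Finset.range (K1 n d + 2)).card := by
    unfold edgeLoad
    apply Finset.card_le_card_of_injOn (fun p =>
      if (G0 n d).Adj p.1 p.2 then (if p.1.val < p.2.val then 0 else 1)
      else 2 + tid n d p.1 p.2 / d)
    · intro p hp
      simp only [Finset.coe_filter, Set.mem_setOf_eq, Finset.mem_filter, Finset.mem_univ, true_and] at hp
      rw [Finset.mem_coe, Finset.mem_range]
      dsimp only
      rcases edge_mem_char n d hd hn hp.1 hp.2 with ⟨ha, _⟩ | ⟨hna, _⟩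
      · rw [if_pos ha]
        split_ifs <;> omega
      · rw [if_neg hna]
        have hc := nonadj_char n d hp.1 hna
        have := div_lt_K1 n d hd (tid_lt n d hn hc)
        omega
    · intro p hp p' hp' hf
      simp only [Finset.coe_filter, Set.mem_setOf_eq, Finset.mem_univ, true_and] at hp hp'
      dsimp only at hf
      have hne : p.1.val ≠ p.2.val := fun h => hp.1 (Fin.ext h)
      have hne' : p'.1.val ≠ p'.2.val := fun h => hp'.1 (Fin.ext h)
      rcases edge_mem_char n d hd hn hp.1 hp.2 with ⟨ha, he⟩ | ⟨hna, he⟩ <;>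
        rcases edge_mem_char n d hd hn hp'.1 hp'.2 with ⟨ha', he'⟩ | ⟨hna', he'⟩
      · rw [if_pos ha, if_pos ha'] at hf
        rcases Sym2.eq_iff.1 (he.symm.trans he') with ⟨q1, q2⟩ | ⟨q1, q2⟩
        · exact Prod.ext q1 q2
        · exfalso
          rw [← q1, ← q2] at hf
          split_ifs at hf <;> omega
      · rw [if_pos ha, if_neg hna'] at hf
        generalize tid n d p'.1 p'.2 / d = q at hf
        split_ifs at hf <;> omega
      · rw [if_neg hna, if_pos ha'] at hf
        generalize tid n d p.1 p.2 / d = q at hf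
        split_ifs at hf <;> omega
      · rw [if_neg hna, if_neg hna'] at hf
        have hc := nonadj_char n d hp.1 hna
        have hc' := nonadj_char n d hp'.1 hna'
        obtain ⟨z, hez, hz⟩ := mid_of_edge n d hd hn hc he
        obtain ⟨z', hez', hz'⟩ := mid_of_edge n d hd hn hc' he'
        have hb := mid_bounds n d hd hn (tid n d p.1 p.2)
        have hb' := mid_bounds n d hd hn (tid n d p'.1 p'.2)
        have hmm : mid n d hd hn (tid n d p.1 p.2) = mid n d hd hn (tid n d p'.1 p'.2) := by
          rcases Sym2.eq_iff.1 (hez.symm.trans hez') with ⟨q1, _⟩ | ⟨q1, q2⟩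
          · exact q1
          · exfalso
            have := congrArg Fin.val q1
            omega
        have hmod : tid n d p.1 p.2 % d = tid n d p'.1 p'.2 % d := by
          have := congrArg Fin.val hmm
          rw [mid_val, mid_val] at this
          omega
        have e1 := Nat.div_add_mod (tid n d p.1 p.2) d
        have e2 := Nat.div_add_mod (tid n d p'.1 p'.2) d
        have hff : tid n d p.1 p.2 / d = tid n d p'.1 p'.2 / d := by omega
        rw [← hff, ← hmod] at e2
        have ht : tid n d p.1 p.2 = tid n d p'.1 p'.2 := by omega
        obtain ⟨q1, q2⟩ := tid_inj n d hc hc' ht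
        exact Prod.ext q1 q2
  simpa using hcard

lemma rvi_le (hd : 0 < d) (hn : d < n) :
    routingVertexIndex (R0 n d hd hn) ≤ K1 n d :=
  Finset.sup_le fun m _ => vertexLoad_le n d hd hn m

lemma rei_le (hd : 0 < d) (hn : d < n) :
    routingEdgeIndex (R0 n d hd hn) ≤ K2 n d :=
  Finset.sup_le fun e _ => edgeLoad_le n d hd hn e

end FP

namespace FP
open Forwarding SimpleGraph

variable (n d : ℕ)

lemma G0_connected (hd : 0 < d) (hn : d < n) : (G0 n d).Connected := by
  haveI : Nonempty (Fin n) := ⟨⟨0, by omega⟩⟩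
  exact ⟨fun x y => ⟨R0walk n d hd hn x y⟩⟩

lemma G0_degree_key (inst : DecidableRel (G0 n d).Adj) (v : Fin n)
    (P : ℕ → Prop) (instP : DecidablePred P) (hP : ∀ w : Fin n, ((G0 n d).Adj v w ↔ P w.val)) :
    @SimpleGraph.degree _ (G0 n d) v (@SimpleGraph.neighborSetFintype _ (G0 n d) _ inst v) =
      ((Finset.range n).filter P).card := by
  rw [SimpleGraph.degree]
  apply Finset.card_bij (fun w _ => w.val)
  · intro w hw
    rw [SimpleGraph.mem_neighborFinset] at hw
    simp only [Finset.mem_filter, Finset.mem_range]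
    exact ⟨w.isLt, (hP w).1 hw⟩
  · intro w _ w' _ h
    exact Fin.ext h
  · intro k hk
    simp only [Finset.mem_filter, Finset.mem_range] at hk
    refine ⟨⟨k, hk.1⟩, ?_, rfl⟩
    rw [SimpleGraph.mem_neighborFinset]
    exact (hP _).2 hk.2

lemma card_range_filter_Icc (hd : 0 < d) (hn : d < n) :
    ((Finset.range n).filter fun k => 1 ≤ k ∧ k ≤ d).card = d := by
  have : ((Finset.range n).filter fun k => 1 ≤ k ∧ k ≤ d) = Finset.Icc 1 d := by
    apply Finset.ext
    intro k
    simp only [Finset.mem_filter, Finset.mem_range, Finset.mem_Icc]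
    omega
  rw [this, Nat.card_Icc]
  omega

lemma card_range_filter_ne (a : ℕ) (ha : a < n) :
    ((Finset.range n).filter fun k => k ≠ a).card = n - 1 := by
  have : ((Finset.range n).filter fun k => k ≠ a) = (Finset.range n).erase a := by
    apply Finset.ext
    intro k
    simp only [Finset.mem_filter, Finset.mem_range, Finset.mem_erase]
    tauto
  rw [this, Finset.card_erase_of_mem (Finset.mem_range.2 ha), Finset.card_range]

lemma card_range_filter_ne2 (a : ℕ) (ha : a < n) (ha0 : a ≠ 0) (hn0 : 0 < n) :
    ((Finset.range n).filter fun k => k ≠ a ∧ k ≠ 0).card = n - 2 := by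
  have : ((Finset.range n).filter fun k => k ≠ a ∧ k ≠ 0) =
      ((Finset.range n).erase a).erase 0 := by
    apply Finset.ext
    intro k
    simp only [Finset.mem_filter, Finset.mem_range, Finset.mem_erase]
    tauto
  rw [this, Finset.card_erase_of_mem, Finset.card_erase_of_mem (Finset.mem_range.2 ha),
    Finset.card_range]
  · omega
  · exact Finset.mem_erase.2 ⟨Ne.symm ha0, Finset.mem_range.2 hn0⟩

lemma G0_minDegree (hd : 0 < d) (hn : d < n) (inst : DecidableRel (G0 n d).Adj) :
    @SimpleGraph.minDegree _ (G0 n d) _ inst = d := by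
  letI := inst
  haveI : Nonempty (Fin n) := ⟨⟨0, by omega⟩⟩
  have hdeg : ∀ v : Fin n, d ≤ (G0 n d).degree v ∧ (v.val = 0 → (G0 n d).degree v = d) := by
    intro v
    by_cases h0 : v.val = 0
    · have hv : (G0 n d).degree v = d := by
        rw [G0_degree_key n d inst v (fun k => 1 ≤ k ∧ k ≤ d) (by infer_instance) ?_,
          card_range_filter_Icc n d hd hn]
        intro w
        rw [adj_iff]
        constructor
        · rintro ⟨h1, h2, h3⟩
          have hw : w.val ≠ v.val := fun h => h1 (Fin.ext h.symm)
          have h2' := h2 h0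
          omega
        · rintro ⟨h1, h2⟩
          refine ⟨fun h => by have := congrArg Fin.val h; omega, fun _ => h2,
            fun hw0 => by omega⟩
      exact ⟨le_of_eq hv.symm, fun _ => hv⟩
    · by_cases hle : v.val ≤ d
      · have hv : (G0 n d).degree v = n - 1 := by
          rw [G0_degree_key n d inst v (fun k => k ≠ v.val) (by infer_instance) ?_,
            card_range_filter_ne n v.val v.isLt]
          intro w
          rw [adj_iff]
          constructor
          · rintro ⟨h1, _, _⟩
            exact fun h => h1 (Fin.ext h.symm)
          · intro h1
            exact ⟨fun h => h1 (congrArg Fin.val h).symm, fun h => absurd h h0, fun _ => hle⟩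
        rw [hv]; exact ⟨by omega, fun h => absurd h h0⟩
      · have hv : (G0 n d).degree v = n - 2 := by
          rw [G0_degree_key n d inst v (fun k => k ≠ v.val ∧ k ≠ 0) (by infer_instance) ?_,
            card_range_filter_ne2 n v.val v.isLt h0 (by omega)]
          intro w
          rw [adj_iff]
          constructor
          · rintro ⟨h1, h2, h3⟩
            refine ⟨fun h => h1 (Fin.ext h.symm), fun h => by have := h3 h; omega⟩
          · rintro ⟨h1, h2⟩
            exact ⟨fun h => h1 (congrArg Fin.val h).symm, fun h => absurd h h0, fun h => absurd h h2⟩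
        rw [hv]
        refine ⟨by omega, fun h => absurd h h0⟩
  apply le_antisymm
  · have := SimpleGraph.minDegree_le_degree (G := G0 n d) (⟨0, by omega⟩ : Fin n)
    rwa [(hdeg _).2 rfl] at this
  · exact (G0 n d).le_minDegree_of_forall_le_degree d fun v => (hdeg v).1

end FP

namespace FP
open Forwarding SimpleGraph

section LB
variable {V : Type*} [Fintype V] [DecidableEq V] {G : SimpleGraph V}

lemma walk_snd {u v : V} (w : G.Walk u v) (h : u ≠ v) :
    ∃ a, G.Adj u a ∧ a ∈ w.support ∧ s(u, a) ∈ w.edges ∧ a ≠ u := by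
  cases w with
  | nil => exact absurd rfl h
  | cons h' w' => exact ⟨_, h', by simp, by simp, (G.ne_of_adj h').symm⟩

lemma walk_penult {u v : V} (w : G.Walk u v) (h : u ≠ v) :
    ∃ a, G.Adj v a ∧ a ∈ w.support ∧ s(v, a) ∈ w.edges ∧ a ≠ v := by
  obtain ⟨a, h1, h2, h3, h4⟩ := walk_snd w.reverse h.symm
  rw [SimpleGraph.Walk.support_reverse, List.mem_reverse] at h2
  rw [SimpleGraph.Walk.edges_reverse, List.mem_reverse] at h3
  exact ⟨a, h1, h2, h3, h4⟩

lemma vertex_lb [DecidableRel G.Adj] (R : Routing G) (u : V) :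
    2 * ((Finset.univ.filter fun v => v ≠ u ∧ ¬ G.Adj u v).card) ≤
      (G.degree u) * routingVertexIndex R := by
  set T := Finset.univ.filter fun v : V => v ≠ u ∧ ¬ G.Adj u v with hT
  set N := G.neighborFinset u with hN
  set S : V → Finset (V × V) := fun a => Finset.univ.filter fun p : V × V =>
    p.1 ≠ p.2 ∧ a ∈ (R.walk p.1 p.2).support ∧ a ≠ p.1 ∧ a ≠ p.2 with hS
  have hsub : (T.image fun v => (u, v)) ∪ (T.image fun v => (v, u)) ⊆ N.biUnion S := by
    intro p hp
    rw [Finset.mem_union, Finset.mem_image, Finset.mem_image] at hp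
    rcases hp with ⟨v, hv, rfl⟩ | ⟨v, hv, rfl⟩ <;>
      rw [hT, Finset.mem_filter] at hv <;> obtain ⟨-, hvu, hna⟩ := hv
    · obtain ⟨a, h1, h2, h3, h4⟩ := walk_snd (R.walk u v) (Ne.symm hvu)
      have hav : a ≠ v := fun h => hna (h ▸ h1)
      rw [Finset.mem_biUnion]
      refine ⟨a, ?_, ?_⟩
      · rw [hN, SimpleGraph.mem_neighborFinset]; exact h1
      · rw [hS]
        simp only [Finset.mem_filter, Finset.mem_univ, true_and]
        exact ⟨Ne.symm hvu, h2, h4, hav⟩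
    · obtain ⟨a, h1, h2, h3, h4⟩ := walk_penult (R.walk v u) hvu
      have hav : a ≠ v := fun h => hna (h ▸ h1)
      rw [Finset.mem_biUnion]
      refine ⟨a, ?_, ?_⟩
      · rw [hN, SimpleGraph.mem_neighborFinset]; exact h1
      · rw [hS]
        simp only [Finset.mem_filter, Finset.mem_univ, true_and]
        exact ⟨hvu, h2, hav, h4⟩
  have hdisj : Disjoint (T.image fun v => (u, v)) (T.image fun v => (v, u)) := by
    rw [Finset.disjoint_left]
    intro p hp hp'
    rw [Finset.mem_image] at hp hp'
    obtain ⟨v, hv, rfl⟩ := hp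
    obtain ⟨v', hv', he⟩ := hp'
    rw [hT, Finset.mem_filter] at hv'
    exact hv'.2.1 (congrArg Prod.fst he)
  have hcard : ((T.image fun v => (u, v)) ∪ (T.image fun v => (v, u))).card = 2 * T.card := by
    rw [Finset.card_union_of_disjoint hdisj,
      Finset.card_image_of_injective _ (fun a b h => congrArg Prod.snd h),
      Finset.card_image_of_injective _ (fun a b h => congrArg Prod.fst h)]
    omega
  calc 2 * T.card = ((T.image fun v => (u, v)) ∪ (T.image fun v => (v, u))).card := hcard.symm
    _ ≤ (N.biUnion S).card := Finset.card_le_card hsub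
    _ ≤ ∑ a ∈ N, (S a).card := Finset.card_biUnion_le
    _ ≤ N.card * routingVertexIndex R := by
        rw [← smul_eq_mul]
        apply Finset.sum_le_card_nsmul
        intro a _
        exact Finset.le_sup (f := vertexLoad R) (Finset.mem_univ a)
    _ = (G.degree u) * routingVertexIndex R := rfl

lemma edge_lb [DecidableRel G.Adj] (R : Routing G) (u : V) :
    2 * (Fintype.card V - 1) ≤ (G.degree u) * routingEdgeIndex R := by
  set N := G.neighborFinset u with hN
  set E := N.image fun a => s(u, a) with hE
  set S : Sym2 V → Finset (V × V) := fun e => Finset.univ.filter fun p : V × V =>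
    p.1 ≠ p.2 ∧ e ∈ (R.walk p.1 p.2).edges with hS
  set T := Finset.univ.erase u with hT
  have hsub : (T.image fun v => (u, v)) ∪ (T.image fun v => (v, u)) ⊆ E.biUnion S := by
    intro p hp
    rw [Finset.mem_union, Finset.mem_image, Finset.mem_image] at hp
    rcases hp with ⟨v, hv, rfl⟩ | ⟨v, hv, rfl⟩ <;>
      rw [hT, Finset.mem_erase] at hv
    · obtain ⟨a, h1, h2, h3, h4⟩ := walk_snd (R.walk u v) (Ne.symm hv.1)
      rw [Finset.mem_biUnion]
      refine ⟨s(u, a), ?_, ?_⟩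
      · rw [hE, Finset.mem_image]
        exact ⟨a, by rw [hN, SimpleGraph.mem_neighborFinset]; exact h1, rfl⟩
      · rw [hS]
        simp only [Finset.mem_filter, Finset.mem_univ, true_and]
        exact ⟨Ne.symm hv.1, h3⟩
    · obtain ⟨a, h1, h2, h3, h4⟩ := walk_penult (R.walk v u) hv.1
      rw [Finset.mem_biUnion]
      refine ⟨s(u, a), ?_, ?_⟩
      · rw [hE, Finset.mem_image]
        exact ⟨a, by rw [hN, SimpleGraph.mem_neighborFinset]; exact h1, rfl⟩
      · rw [hS]
        simp only [Finset.mem_filter, Finset.mem_univ, true_and]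
        exact ⟨hv.1, h3⟩
  have hdisj : Disjoint (T.image fun v => (u, v)) (T.image fun v => (v, u)) := by
    rw [Finset.disjoint_left]
    intro p hp hp'
    rw [Finset.mem_image] at hp hp'
    obtain ⟨v, hv, rfl⟩ := hp
    obtain ⟨v', hv', he⟩ := hp'
    rw [hT, Finset.mem_erase] at hv'
    exact hv'.1 (congrArg Prod.fst he)
  have hcard : ((T.image fun v => (u, v)) ∪ (T.image fun v => (v, u))).card = 2 * T.card := by
    rw [Finset.card_union_of_disjoint hdisj,
      Finset.card_image_of_injective _ (fun a b h => congrArg Prod.snd h),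
      Finset.card_image_of_injective _ (fun a b h => congrArg Prod.fst h)]
    omega
  have hTcard : T.card = Fintype.card V - 1 := by
    rw [hT, Finset.card_erase_of_mem (Finset.mem_univ u), Finset.card_univ]
  have hEcard : E.card = N.card := by
    rw [hE]
    apply Finset.card_image_of_injOn
    intro a ha b hb h
    have ha' : G.Adj u a := by
      rw [Finset.mem_coe, hN, SimpleGraph.mem_neighborFinset] at ha
      exact ha
    rcases Sym2.eq_iff.1 h with ⟨-, h2⟩ | ⟨h1, h2⟩
    · exact h2
    · exact absurd h2 (G.ne_of_adj ha').symm
  calc 2 * (Fintype.card V - 1) = 2 * T.card := by rw [hTcard]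
    _ ≤ (E.biUnion S).card := hcard ▸ Finset.card_le_card hsub
    _ ≤ ∑ e ∈ E, (S e).card := Finset.card_biUnion_le
    _ ≤ E.card * routingEdgeIndex R := by
        rw [← smul_eq_mul]
        apply Finset.sum_le_card_nsmul
        intro e _
        exact Finset.le_sup (f := edgeLoad R) (Finset.mem_univ e)
    _ = (G.degree u) * routingEdgeIndex R := by rw [hEcard]; rfl

lemma T_card [DecidableRel G.Adj] (u : V) :
    (Finset.univ.filter fun v => v ≠ u ∧ ¬ G.Adj u v).card =
      Fintype.card V - 1 - G.degree u := by
  set T := Finset.univ.filter fun v : V => v ≠ u ∧ ¬ G.Adj u v with hT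
  set N := G.neighborFinset u with hN
  have hunion : N ∪ T = Finset.univ.erase u := by
    apply Finset.ext
    intro v
    rw [Finset.mem_union, hT, Finset.mem_filter, hN, SimpleGraph.mem_neighborFinset,
      Finset.mem_erase]
    constructor
    · rintro (h | ⟨-, h1, h2⟩)
      · exact ⟨(G.ne_of_adj h).symm, Finset.mem_univ v⟩
      · exact ⟨h1, Finset.mem_univ v⟩
    · rintro ⟨h1, -⟩
      by_cases ha : G.Adj u v
      · exact Or.inl ha
      · exact Or.inr ⟨Finset.mem_univ v, h1, ha⟩
  have hdisj : Disjoint N T := by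
    rw [Finset.disjoint_left]
    intro v hv hv'
    rw [hN, SimpleGraph.mem_neighborFinset] at hv
    rw [hT, Finset.mem_filter] at hv'
    exact hv'.2.2 hv
  have := Finset.card_union_of_disjoint hdisj
  rw [hunion, Finset.card_erase_of_mem (Finset.mem_univ u), Finset.card_univ] at this
  have hdeg : G.degree u = N.card := rfl
  omega

noncomputable def routingOf (hG : G.Connected) : Routing G :=
  ⟨fun x y => ((hG.preconnected x y).some.toPath : G.Path x y).1,
   fun x y => ((hG.preconnected x y).some.toPath).2⟩

end LB

end FP

namespace FP
open Forwarding SimpleGraph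

variable (n d : ℕ)

lemma xi_lb (hd : 0 < d) (hn : d < n) (G : SimpleGraph (Fin n)) (hG : G.Connected)
    (hmin : @SimpleGraph.minDegree (Fin n) G _ (Classical.decRel _) = d) :
    K1 n d ≤ xi G := by
  letI : DecidableRel G.Adj := Classical.decRel _
  haveI : Nonempty (Fin n) := ⟨⟨0, by omega⟩⟩
  obtain ⟨u, hu⟩ := G.exists_minimal_degree_vertex
  have hdu : G.degree u = d := by rw [← hu]; exact hmin
  obtain ⟨R, hR⟩ : ∃ R : Routing G, routingVertexIndex R = xi G :=
    Nat.sInf_mem (⟨_, routingOf hG, rfl⟩ :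
      {k | ∃ R : Routing G, routingVertexIndex R = k}.Nonempty)
  have h1 := vertex_lb R u
  rw [T_card u, hdu, Fintype.card_fin, hR] at h1
  exact K1_le n d hd h1

lemma pi_lb (hd : 0 < d) (hn : d < n) (G : SimpleGraph (Fin n)) (hG : G.Connected)
    (hmin : @SimpleGraph.minDegree (Fin n) G _ (Classical.decRel _) = d) :
    K2 n d ≤ piIdx G := by
  letI : DecidableRel G.Adj := Classical.decRel _
  haveI : Nonempty (Fin n) := ⟨⟨0, by omega⟩⟩
  obtain ⟨u, hu⟩ := G.exists_minimal_degree_vertex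
  have hdu : G.degree u = d := by rw [← hu]; exact hmin
  obtain ⟨R, hR⟩ : ∃ R : Routing G, routingEdgeIndex R = piIdx G :=
    Nat.sInf_mem (⟨_, routingOf hG, rfl⟩ :
      {k | ∃ R : Routing G, routingEdgeIndex R = k}.Nonempty)
  have h1 := edge_lb R u
  rw [Fintype.card_fin, hdu, hR] at h1
  exact K2_le n d hd h1

lemma xi_G0 (hd : 0 < d) (hn : d < n) : xi (G0 n d) = K1 n d := by
  apply le_antisymm
  · exact le_trans (Nat.sInf_le ⟨R0 n d hd hn, rfl⟩) (rvi_le n d hd hn)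
  · exact xi_lb n d hd hn (G0 n d) (G0_connected n d hd hn)
      (G0_minDegree n d hd hn (Classical.decRel _))

lemma pi_G0 (hd : 0 < d) (hn : d < n) : piIdx (G0 n d) = K2 n d := by
  apply le_antisymm
  · exact le_trans (Nat.sInf_le ⟨R0 n d hd hn, rfl⟩) (rei_le n d hd hn)
  · exact pi_lb n d hd hn (G0 n d) (G0_connected n d hd hn)
      (G0_minDegree n d hd hn (Classical.decRel _))

end FP

/-- For `n > δ ≥ 1`, the minimum of `ξ(G)` over connected
graphs on `n` vertices with minimum degree `δ` equals `⌈2(n-1-δ)/δ⌉`, and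
the minimum of `π(G)` over such graphs equals `⌈2(n-1)/δ⌉`. -/
theorem forwarding_min_over_minDegree (n d : ℕ) (hd : 1 ≤ d) (hn : d < n) :
    (sInf { k | ∃ G : SimpleGraph (Fin n), G.Connected ∧
        (@SimpleGraph.minDegree (Fin n) G _ (Classical.decRel _)) = d ∧
        Forwarding.xi G = k } : ℤ) = ⌈(2 * ((n : ℚ) - 1 - d)) / d⌉ ∧
    (sInf { k | ∃ G : SimpleGraph (Fin n), G.Connected ∧
        (@SimpleGraph.minDegree (Fin n) G _ (Classical.decRel _)) = d ∧
        Forwarding.piIdx G = k } : ℤ) = ⌈(2 * ((n : ℚ) - 1)) / d⌉ := by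
  have hd0 : 0 < d := hd
  have hK1 : ((FP.K1 n d : ℕ) : ℤ) = ⌈(2 * ((n : ℚ) - 1 - d)) / d⌉ := by
    rw [show (2 * ((n : ℚ) - 1 - d)) = ((2 * (n - 1 - d) : ℕ) : ℚ) from by
      rw [Nat.cast_mul, Nat.cast_sub (by omega : d ≤ n - 1),
        Nat.cast_sub (by omega : 1 ≤ n), Nat.cast_ofNat, Nat.cast_one]]
    rw [FP.ceil_cast d hd0 (2 * (n - 1 - d))]
    rfl
  have hK2 : ((FP.K2 n d : ℕ) : ℤ) = ⌈(2 * ((n : ℚ) - 1)) / d⌉ := by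
    rw [show (2 * ((n : ℚ) - 1)) = ((2 * (n - 1) : ℕ) : ℚ) from by
      rw [Nat.cast_mul, Nat.cast_sub (by omega : 1 ≤ n), Nat.cast_ofNat, Nat.cast_one]]
    rw [FP.ceil_cast d hd0 (2 * (n - 1))]
    rfl
  constructor
  · have hmem : ((FP.K1 n d : ℕ) : ℤ) ∈ { k : ℤ | ∃ G : SimpleGraph (Fin n), G.Connected ∧
        (@SimpleGraph.minDegree (Fin n) G _ (Classical.decRel _)) = d ∧
        (Forwarding.xi G : ℤ) = k } :=
      ⟨FP.G0 n d, FP.G0_connected n d hd0 hn,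
        FP.G0_minDegree n d hd0 hn (Classical.decRel _), by
          rw [FP.xi_G0 n d hd0 hn]⟩
    have heq : sInf { k : ℤ | ∃ G : SimpleGraph (Fin n), G.Connected ∧
        (@SimpleGraph.minDegree (Fin n) G _ (Classical.decRel _)) = d ∧
        (Forwarding.xi G : ℤ) = k } = ((FP.K1 n d : ℕ) : ℤ) := by
      apply le_antisymm
      · exact csInf_le ⟨0, fun b hb => by obtain ⟨G, -, -, hx⟩ := hb; rw [← hx]; positivity⟩ hmem
      · apply le_csInf ⟨_, hmem⟩
        rintro b ⟨G, hc, hm, hx⟩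
        rw [← hx]
        exact_mod_cast FP.xi_lb n d hd0 hn G hc hm
    rw [heq, hK1]
  · have hmem : ((FP.K2 n d : ℕ) : ℤ) ∈ { k : ℤ | ∃ G : SimpleGraph (Fin n), G.Connected ∧
        (@SimpleGraph.minDegree (Fin n) G _ (Classical.decRel _)) = d ∧
        (Forwarding.piIdx G : ℤ) = k } :=
      ⟨FP.G0 n d, FP.G0_connected n d hd0 hn,
        FP.G0_minDegree n d hd0 hn (Classical.decRel _), by
          rw [FP.pi_G0 n d hd0 hn]⟩
    have heq : sInf { k : ℤ | ∃ G : SimpleGraph (Fin n), G.Connected ∧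
        (@SimpleGraph.minDegree (Fin n) G _ (Classical.decRel _)) = d ∧
        (Forwarding.piIdx G : ℤ) = k } = ((FP.K2 n d : ℕ) : ℤ) := by
      apply le_antisymm
      · exact csInf_le ⟨0, fun b hb => by obtain ⟨G, -, -, hx⟩ := hb; rw [← hx]; positivity⟩ hmem
      · apply le_csInf ⟨_, hmem⟩
        rintro b ⟨G, hc, hm, hx⟩
        rw [← hx]
        exact_mod_cast FP.pi_lb n d hd0 hn G hc hm
    rw [heq, hK2]
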